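/- For all a, b ∈ lie_n, η_gr(a, b) = −Σ_{i=1}^n (∂_i a)·x_i·ι(∂_i b) in ass_n. -/

import Mathlib

noncomputable section

open scoped TensorProduct

attribute [local instance 100] LieRing.ofAssociativeRing

/-- The free unital associative algebra over `ℚ` on `N` generators. -/
abbrev Ass (N : ℕ) : Type := FreeAlgebra ℚ (Fin N)

/-- The `i`-th generator `x_i`. -/
def gen {N : ℕ} (i : Fin N) : Ass N := FreeAlgebra.ι ℚ i

/-- The monomial (word) associated to a list of generator indices. -/
def wordProd {N : ℕ} (l : List (Fin N)) : Ass N := (l.map gen).prod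

/-- Extend a function on words (monomials) to a `ℚ`-linear map on the free algebra,
using the monomial basis. -/
def liftWord {N : ℕ} {A : Type} [AddCommGroup A] [Module ℚ A]
    (f : List (Fin N) → A) : Ass N →ₗ[ℚ] A :=
  (FreeAlgebra.basisFreeMonoid ℚ (Fin N)).constr ℚ fun w => f w.toList

/-- `μ_gr` on a word. -/
def muWord {N : ℕ} : List (Fin N) → Ass N
  | [] => 0
  | [_] => 0
  | a :: b :: t => (if a = b then -(wordProd (a :: t)) else 0) + gen a * muWord (b :: t)

/-- The linearized self-intersection operation `μ_gr`. -/
def muGr (N : ℕ) : Ass N →ₗ[ℚ] Ass N := liftWord muWord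

/-- The antipode: the anti-automorphism `ι` with `ι(x_i) = -x_i`, as a linear map. -/
def iotaMap (N : ℕ) : Ass N →ₗ[ℚ] Ass N :=
  liftWord fun l => ((-1 : ℚ) ^ l.length) • wordProd l.reverse

/-- The (right) partial derivative `∂_i`, characterized on `lie_N` by
`a = Σ_i (∂_i a) x_i`. -/
def partialD {N : ℕ} (i : Fin N) : Ass N →ₗ[ℚ] Ass N :=
  liftWord fun l =>
    match l.getLast? with
    | some a => if a = i then wordProd l.dropLast else 0
    | none => 0

/-- `η_gr` on a pair of words. -/
def etaWord {N : ℕ} (l r : List (Fin N)) : Ass N :=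
  match l.getLast?, r with
  | some a, b :: t => if a = b then -(wordProd (l.dropLast ++ a :: t)) else 0
  | _, _ => 0

/-- The linearized homotopy intersection form `η_gr`. -/
def etaGr (N : ℕ) : Ass N →ₗ[ℚ] Ass N →ₗ[ℚ] Ass N :=
  liftWord fun l => liftWord fun r => etaWord l r

/-- Degree-`k` homogeneous part of a free algebra (word-length grading). -/
def homogS (X : Type) (k : ℕ) : Submodule ℚ (FreeAlgebra ℚ X) :=
  Submodule.span ℚ {z | ∃ l : List X, l.length = k ∧ z = (l.map (FreeAlgebra.ι ℚ)).prod}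

/-- The projection onto the degree-`k` homogeneous component. -/
def homogComp {N : ℕ} (k : ℕ) : Ass N →ₗ[ℚ] Ass N :=
  liftWord fun l => if l.length = k then wordProd l else 0

/-- The free Lie algebra on `x_1, …, x_N`, as the Lie subalgebra of `Ass N`
(with the commutator bracket) generated by the generators. -/
def lieN (N : ℕ) : LieSubalgebra ℚ (Ass N) :=
  LieSubalgebra.lieSpan ℚ (Ass N) (Set.range (gen (N := N)))

/-- The generator `x_i` as an element of `lie_N`. -/
def genL (N : ℕ) (i : Fin N) : lieN N :=
  ⟨gen i, LieSubalgebra.subset_lieSpan ⟨i, rfl⟩⟩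

/-- Substitution: the algebra endomorphism of `ass_2` with `x ↦ p`, `y ↦ q`. -/
def sub2 (p q : Ass 2) : Ass 2 →ₐ[ℚ] Ass 2 := FreeAlgebra.lift ℚ ![p, q]

/-- `x`. -/
def xA : Ass 2 := gen 0
/-- `y`. -/
def yA : Ass 2 := gen 1

/-- Equation (E1): `φ(y,0) − φ(x+y,0) = 0`. -/
def E1 (φ : Ass 2) : Prop := sub2 yA 0 φ - sub2 (xA + yA) 0 φ = 0

/-- Equation (E2): `(∂_y φ) + (∂_y φ)(y,0) − (∂_y φ)(x+y,0) − R(φ) = 0`,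
where `R` is the restriction of `μ_gr` to `lie_2`. -/
def E2 (φ : Ass 2) : Prop :=
  partialD 1 φ + sub2 yA 0 (partialD 1 φ) - sub2 (xA + yA) 0 (partialD 1 φ) - muGr 2 φ = 0

/-- Equation (E3): `[x, φ(y,x)] + [y, φ(x,y)] = 0`. -/
def E3 (φ : Ass 2) : Prop := ⁅xA, sub2 yA xA φ⁆ + ⁅yA, φ⁆ = 0

/-- `ν^em(φ) = (φ(y,x), φ(x,y))`. -/
def nuEm (φ : Ass 2) : Fin 2 → Ass 2 := ![sub2 yA xA φ, φ]

/-- The space `grt_1^em` of solutions to the linearized emergent equations. -/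
def grt1em : Set (Ass 2) := {φ | φ ∈ lieN 2 ∧ E1 φ ∧ E2 φ ∧ E3 φ}

/-- The derivation `ρ(ũ)` on a word. -/
def rhoWord {N : ℕ} (u : Fin N → Ass N) : List (Fin N) → Ass N
  | [] => 0
  | a :: t => ⁅gen a, u a⁆ * wordProd t + gen a * rhoWord u t

/-- The tangential derivation `ρ(ũ)`, determined by `ρ(ũ)(x_i) = [x_i, u_i]`. -/
def rho {N : ℕ} (u : Fin N → Ass N) : Ass N →ₗ[ℚ] Ass N := liftWord (rhoWord u)

/-- The span of commutators in `ass_N`. -/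
def trRel (N : ℕ) : Submodule ℚ (Ass N) :=
  Submodule.span ℚ {z | ∃ a b : Ass N, z = a * b - b * a}

/-- The trace space `tr_N = ass_N/[ass_N, ass_N]`. -/
abbrev Tr (N : ℕ) : Type := Ass N ⧸ trRel N

/-- The projection `|·| : ass_N → tr_N`. -/
def trM (N : ℕ) : Ass N →ₗ[ℚ] Tr N := (trRel N).mkQ

/-- The divergence `div(ũ) = Σ_i |x_i (∂_i u_i)|`. -/
def divergence {N : ℕ} (u : Fin N → Ass N) : Tr N :=
  ∑ i, trM N (gen i * partialD i (u i))

/-- `ũ ∈ tder_N`: all components lie in `lie_N`. -/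
def IsTDer {N : ℕ} (u : Fin N → Ass N) : Prop := ∀ i, u i ∈ lieN N

/-- `ũ ∈ sder_N`. -/
def IsSDer {N : ℕ} (u : Fin N → Ass N) : Prop := IsTDer u ∧ rho u (∑ i, gen i) = 0

/-- `ũ ∈ krv_N`. -/
def IsKRV {N : ℕ} (u : Fin N → Ass N) : Prop :=
  IsSDer u ∧ ∃ f : Fin (N + 1) → Polynomial ℚ,
    divergence u =
      trM N (Polynomial.aeval (∑ i, gen i) (f 0)) +
        ∑ i : Fin N, trM N (Polynomial.aeval (gen i) (f i.succ))

/-- `ũ ∈ krv_N^0`. -/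
def IsKRV0 {N : ℕ} (u : Fin N → Ass N) : Prop :=
  IsSDer u ∧ ∃ cf : Fin N → ℚ, divergence u = ∑ i, cf i • trM N (gen i)

/-- The swap `u(x,y) ↦ u(y,x)`. -/
def swapA : Ass 2 →ₐ[ℚ] Ass 2 := sub2 yA xA

/-- `ũ ∈ krv_2^sym`. -/
def IsKRVsym (u : Fin 2 → Ass 2) : Prop := IsKRV u ∧ u 1 = swapA (u 0)


/-- The coproduct `Δ` on `ass_N`, with `Δ(x_i) = x_i ⊗ 1 + 1 ⊗ x_i`. -/
def comulA (N : ℕ) : Ass N →ₐ[ℚ] (Ass N ⊗[ℚ] Ass N) :=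
  FreeAlgebra.lift ℚ fun i => gen i ⊗ₜ[ℚ] (1 : Ass N) + (1 : Ass N) ⊗ₜ[ℚ] gen i

/-- `μ_{r,gr} = ((|·|∘mult) ⊗ id) ∘ (id ⊗ ((ι ⊗ id) ∘ Δ)) ∘ (id ⊗ μ_gr) ∘ Δ`. -/
def muR (N : ℕ) : Ass N →ₗ[ℚ] Tr N ⊗[ℚ] Ass N :=
  (TensorProduct.map ((trM N).comp (LinearMap.mul' ℚ (Ass N))) LinearMap.id).comp <|
    ((TensorProduct.assoc ℚ (Ass N) (Ass N) (Ass N)).symm.toLinearMap).comp <|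
      (TensorProduct.map LinearMap.id
          ((TensorProduct.map (iotaMap N) LinearMap.id).comp (comulA N).toLinearMap)).comp <|
        (TensorProduct.map LinearMap.id (muGr N)).comp (comulA N).toLinearMap

/-- `Alt(a ⊗ b) = a ⊗ b - b ⊗ a`. -/
def altMap (N : ℕ) : Tr N ⊗[ℚ] Tr N →ₗ[ℚ] Tr N ⊗[ℚ] Tr N :=
  LinearMap.id - (TensorProduct.comm ℚ (Tr N) (Tr N)).toLinearMap

/-- The linearized Turaev cobracket `δ_gr = Alt ∘ (id ⊗ |·|) ∘ μ_{r,gr}`. -/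
def Dgr (N : ℕ) : Ass N →ₗ[ℚ] Tr N ⊗[ℚ] Tr N :=
  (altMap N).comp ((TensorProduct.map LinearMap.id (trM N)).comp (muR N))

/-- Index type of the generators `t_{pq}` (`p ≠ q`) of the Drinfeld–Kohno Lie algebra. -/
def dkGenIdx (N : ℕ) : Type := {pq : Fin N × Fin N // pq.1 ≠ pq.2}

abbrev FLdk (N : ℕ) := FreeLieAlgebra ℚ (dkGenIdx N)

def tFree {N : ℕ} (p q : Fin N) (h : p ≠ q) : FLdk N := FreeLieAlgebra.of ℚ ⟨(p, q), h⟩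

/-- The defining relations of `dk_N`: symmetry, commutation and 4T. -/
def dkRels (N : ℕ) : Set (FLdk N) :=
  {z | ∃ (p q : Fin N) (h : p ≠ q), z = tFree p q h - tFree q p h.symm} ∪
  {z | ∃ (p q r s : Fin N) (hpq : p ≠ q) (hrs : r ≠ s),
      p ≠ r ∧ p ≠ s ∧ q ≠ r ∧ q ≠ s ∧ z = ⁅tFree p q hpq, tFree r s hrs⁆} ∪
  {z | ∃ (p q r : Fin N) (hpq : p ≠ q) (hqr : q ≠ r) (hpr : p ≠ r),
      z = ⁅tFree p q hpq + tFree q r hqr, tFree p r hpr⁆}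

def dkIdeal (N : ℕ) : LieIdeal ℚ (FLdk N) := LieSubmodule.lieSpan ℚ (FLdk N) (dkRels N)

/-- The Drinfeld–Kohno Lie algebra `dk_N`. -/
abbrev dk (N : ℕ) := FLdk N ⧸ dkIdeal N

/-- The generator `t_{pq}` of `dk_N`. -/
def tGen {N : ℕ} (p q : Fin N) (h : p ≠ q) : dk N :=
  LieSubmodule.Quotient.mk (N := dkIdeal N) (tFree p q h)

/-- Index type of the generators of the mixed Drinfeld–Kohno Lie algebra `dk_{m,n}`:
pairs of distinct indices in `Fin (m+n)`, not both poles (i.e., not both `< m`). -/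
def MIdx (m n : ℕ) : Type :=
  {pq : Fin (m + n) × Fin (m + n) // pq.1 ≠ pq.2 ∧ (m ≤ (pq.1 : ℕ) ∨ m ≤ (pq.2 : ℕ))}

abbrev FLmix (m n : ℕ) := FreeLieAlgebra ℚ (MIdx m n)

def tMix {m n : ℕ} (p q : Fin (m + n)) (h : p ≠ q)
    (hm : m ≤ (p : ℕ) ∨ m ≤ (q : ℕ)) : FLmix m n :=
  FreeLieAlgebra.of ℚ ⟨(p, q), h, hm⟩

/-- The defining relations of `dk_{m,n}`: exactly the symmetry, commutation and 4T relations
of `dk_{m+n}` involving only mixed pairs. -/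
def mixRels (m n : ℕ) : Set (FLmix m n) :=
  {z | ∃ (p q : Fin (m + n)) (h : p ≠ q) (hm : m ≤ (p : ℕ) ∨ m ≤ (q : ℕ)),
      z = tMix p q h hm - tMix q p h.symm hm.symm} ∪
  {z | ∃ (p q r s : Fin (m + n)) (hpq : p ≠ q) (hmpq : m ≤ (p : ℕ) ∨ m ≤ (q : ℕ))
      (hrs : r ≠ s) (hmrs : m ≤ (r : ℕ) ∨ m ≤ (s : ℕ)),
      p ≠ r ∧ p ≠ s ∧ q ≠ r ∧ q ≠ s ∧ z = ⁅tMix p q hpq hmpq, tMix r s hrs hmrs⁆} ∪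
  {z | ∃ (p q r : Fin (m + n)) (hpq : p ≠ q) (hmpq : m ≤ (p : ℕ) ∨ m ≤ (q : ℕ))
      (hqr : q ≠ r) (hmqr : m ≤ (q : ℕ) ∨ m ≤ (r : ℕ))
      (hpr : p ≠ r) (hmpr : m ≤ (p : ℕ) ∨ m ≤ (r : ℕ)),
      z = ⁅tMix p q hpq hmpq + tMix q r hqr hmqr, tMix p r hpr hmpr⁆}

def mixIdeal (m n : ℕ) : LieIdeal ℚ (FLmix m n) :=
  LieSubmodule.lieSpan ℚ (FLmix m n) (mixRels m n)

/-- The mixed Drinfeld–Kohno Lie algebra `dk_{m,n}`. -/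
abbrev dkmn (m n : ℕ) := FLmix m n ⧸ mixIdeal m n

lemma castAdd_ne_natAdd {m n : ℕ} (i : Fin m) (j : Fin n) :
    Fin.castAdd n i ≠ Fin.natAdd m j := by
  intro h
  have hv := congrArg Fin.val h
  simp only [Fin.coe_castAdd, Fin.coe_natAdd] at hv
  have := i.isLt
  omega

lemma natAdd_ne {m n : ℕ} {u v : Fin n} (h : u ≠ v) :
    Fin.natAdd m u ≠ Fin.natAdd m v := by
  intro hh
  exact h (by
    have hv := congrArg Fin.val hh
    simp only [Fin.coe_natAdd] at hv
    exact Fin.ext (by omega))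

lemma natAdd_le_left (m : ℕ) {n : ℕ} (j : Fin n) : m ≤ (Fin.natAdd m j : ℕ) := by
  simp only [Fin.coe_natAdd]; omega

/-- The generator `a_{ij}` of `dk_{m,n}` (0-indexed): `a_{ij} = t_{i(m+j)}`. -/
def aG {m n : ℕ} (i : Fin m) (j : Fin n) : dkmn m n :=
  LieSubmodule.Quotient.mk (N := mixIdeal m n)
    (tMix (Fin.castAdd n i) (Fin.natAdd m j) (castAdd_ne_natAdd i j)
      (Or.inr (natAdd_le_left m j)))

/-- The generator `c_{ij}` of `dk_{m,n}` (0-indexed): `c_{ij} = t_{(m+i)(m+j)}`. -/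
def cG {m n : ℕ} (u v : Fin n) (h : u ≠ v) : dkmn m n :=
  LieSubmodule.Quotient.mk (N := mixIdeal m n)
    (tMix (Fin.natAdd m u) (Fin.natAdd m v) (natAdd_ne h)
      (Or.inl (natAdd_le_left m u)))

/-- The Lie ideal `c` of `dk_{m,n}` generated by the `c_{ij}`. -/
def cId (m n : ℕ) : LieIdeal ℚ (dkmn m n) :=
  LieSubmodule.lieSpan ℚ (dkmn m n) {z | ∃ (u v : Fin n) (h : u ≠ v), z = cG u v h}

/-- The Lie ideal `[c,c]`. -/
def ccId (m n : ℕ) : LieIdeal ℚ (dkmn m n) := ⁅cId m n, cId m n⁆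

/-- The emergent Drinfeld–Kohno Lie algebra `edk_{m,n} = dk_{m,n}/[c,c]`. -/
abbrev edk (m n : ℕ) := dkmn m n ⧸ ccId m n

/-- Projection `dk_{m,n} → edk_{m,n}` as a function. -/
def eprojF (m n : ℕ) : dkmn m n → edk m n := LieSubmodule.Quotient.mk (N := ccId m n)

/-- Projection `dk_{m,n} → edk_{m,n}` as a `ℚ`-linear map. -/
def eproj (m n : ℕ) : dkmn m n →ₗ[ℚ] edk m n := (ccId m n).toSubmodule.mkQ

/-- `a_{ij}` in `edk_{m,n}`. -/
def aGE {m n : ℕ} (i : Fin m) (j : Fin n) : edk m n := eprojF m n (aG i j)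

/-- `c_{ij}` in `edk_{m,n}`. -/
def cGE {m n : ℕ} (u v : Fin n) (h : u ≠ v) : edk m n := eprojF m n (cG u v h)

/-- The canonical Lie algebra map `FreeLieAlgebra ℚ (Fin m) → ass_m`,
whose image is `lie_m`. -/
def toAssL (m : ℕ) : FreeLieAlgebra ℚ (Fin m) →ₗ⁅ℚ⁆ FreeAlgebra ℚ (Fin m) :=
  FreeLieAlgebra.lift ℚ (FreeAlgebra.ι ℚ)

/-- `u ↦ u_i` (at `dk` level): the Lie algebra map with `x_p ↦ a_{pi}`. -/
def uEldk {m n : ℕ} (i : Fin n) : FreeLieAlgebra ℚ (Fin m) →ₗ⁅ℚ⁆ dkmn m n :=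
  FreeLieAlgebra.lift ℚ fun p => aG p i

/-- `u ↦ u_i`: the Lie algebra map `lie_m → edk_{m,n}` with `x_p ↦ a_{pi}`. -/
def uEl {m n : ℕ} (i : Fin n) : FreeLieAlgebra ℚ (Fin m) →ₗ⁅ℚ⁆ edk m n :=
  FreeLieAlgebra.lift ℚ fun p => aGE p i

/-- Iterated bracketing `[a_{p₁ j}, [a_{p₂ j}, [… , [a_{p_d j}, ξ]…]]]`. -/
def adWApply {m n : ℕ} (j : Fin n) : List (Fin m) → edk m n → edk m n
  | [], ξ => ξ
  | p :: t, ξ => ⁅aGE p j, adWApply j t ξ⁆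


/-- `w ↦ w_{uv}`: the linear map `ass_m → edk_{m,n}` with
`1 ↦ c_{uv}` and `(x_{p₁}⋯x_{p_d}) ↦ [a_{p₁ v}, [… [a_{p_d v}, c_{uv}]…]]`. -/
def wEl {m n : ℕ} (u v : Fin n) (h : u ≠ v) : Ass m →ₗ[ℚ] edk m n :=
  liftWord fun l => adWApply v l (cGE u v h)

/-- `ad_w^{(l)}(ξ)`, linear in `w`. -/
def adOp {m n : ℕ} (l : Fin n) (ξ : edk m n) : Ass m →ₗ[ℚ] edk m n :=
  liftWord fun lst => adWApply l lst ξ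

/-- Degree-`k` part of the free Lie algebra (generators of degree 1), realized as the
preimage of the degree-`k` part of the free associative algebra under the canonical map. -/
def flHomog (X : Type) (k : ℕ) : Submodule ℚ (FreeLieAlgebra ℚ X) :=
  Submodule.comap
    (FreeLieAlgebra.lift ℚ (FreeAlgebra.ι ℚ (X := X)) :
      FreeLieAlgebra ℚ X →ₗ⁅ℚ⁆ FreeAlgebra ℚ X).toLinearMap
    (homogS X k)

/-- Degree-`k` part of `edk_{m,n}`. -/
def edkHomog (m n : ℕ) (k : ℕ) : Submodule ℚ (edk m n) :=
  (((flHomog (MIdx m n) k).map (mixIdeal m n).toSubmodule.mkQ)).map (eproj m n)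

-- Fin helper lemmas
lemma castSucc_ne_of_ne {n : ℕ} {u v : Fin n} (h : u ≠ v) :
    Fin.castSucc u ≠ Fin.castSucc v := fun hh => h (Fin.castSucc_injective n hh)

lemma succ_ne_of_ne {n : ℕ} {u v : Fin n} (h : u ≠ v) :
    Fin.succ u ≠ Fin.succ v := fun hh => h (Fin.succ_injective n hh)

lemma castSucc_ne_last {n : ℕ} (u : Fin n) : Fin.castSucc u ≠ Fin.last n :=
  (Fin.castSucc_lt_last u).ne

lemma castSucc_ne_succ_of_le {n : ℕ} {u v : Fin n} (h : u ≤ v) :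
    Fin.castSucc u ≠ Fin.succ v := by
  intro hh
  have hv := congrArg Fin.val hh
  simp only [Fin.coe_castSucc, Fin.val_succ] at hv
  have := Fin.le_def.mp h
  omega

/-- `D` is the pole coface map `δ_k : dk_{m,n} → dk_{m+1,n}`, `0 ≤ k ≤ m`
(1-indexed `k`; `k = 0` is extension on the left). -/
def IsDeltaPole (m n : ℕ) (k : ℕ) (D : dkmn m n →ₗ⁅ℚ⁆ dkmn (m + 1) n) : Prop :=
  (∀ (i : Fin m) (j : Fin n),
     (((i : ℕ) + 1 < k) → D (aG i j) = aG (Fin.castSucc i) j) ∧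
     (((i : ℕ) + 1 = k) → D (aG i j) = aG (Fin.castSucc i) j + aG (Fin.succ i) j) ∧
     ((k < (i : ℕ) + 1) → D (aG i j) = aG (Fin.succ i) j)) ∧
  (∀ (u v : Fin n) (h : u ≠ v), D (cG u v h) = cG u v h)

/-- `D` is the strand coface map `δ_{m+κ} : dk_{m,n} → dk_{m,n+1}`, `1 ≤ κ ≤ n+1`
(1-indexed strand `κ`; `κ = n+1` is extension on the right). -/
def IsDeltaStrand (m n : ℕ) (κ : ℕ) (D : dkmn m n →ₗ⁅ℚ⁆ dkmn m (n + 1)) : Prop :=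
  (∀ (i : Fin m) (j : Fin n),
     (((j : ℕ) + 1 < κ) → D (aG i j) = aG i (Fin.castSucc j)) ∧
     (((j : ℕ) + 1 = κ) → D (aG i j) = aG i (Fin.castSucc j) + aG i (Fin.succ j)) ∧
     ((κ < (j : ℕ) + 1) → D (aG i j) = aG i (Fin.succ j))) ∧
  (∀ (u v : Fin n) (h : u < v),
     (((v : ℕ) + 1 < κ) →
        D (cG u v h.ne) = cG (Fin.castSucc u) (Fin.castSucc v) (castSucc_ne_of_ne h.ne)) ∧
     (((v : ℕ) + 1 = κ) →
        D (cG u v h.ne) = cG (Fin.castSucc u) (Fin.castSucc v) (castSucc_ne_of_ne h.ne)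
          + cG (Fin.castSucc u) (Fin.succ v) (castSucc_ne_succ_of_le h.le)) ∧
     (((u : ℕ) + 1 < κ ∧ κ < (v : ℕ) + 1) →
        D (cG u v h.ne) = cG (Fin.castSucc u) (Fin.succ v) (castSucc_ne_succ_of_le h.le)) ∧
     (((u : ℕ) + 1 = κ) →
        D (cG u v h.ne) = cG (Fin.castSucc u) (Fin.succ v) (castSucc_ne_succ_of_le h.le)
          + cG (Fin.succ u) (Fin.succ v) (succ_ne_of_ne h.ne)) ∧
     ((κ < (u : ℕ) + 1) →
        D (cG u v h.ne) = cG (Fin.succ u) (Fin.succ v) (succ_ne_of_ne h.ne)))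

/-- `T` is `ϑ_{m+1} : dk_{m+1,n} → dk_{m,n+1}` (the last pole becomes the first strand). -/
def IsTheta (m n : ℕ) (T : dkmn (m + 1) n →ₗ⁅ℚ⁆ dkmn m (n + 1)) : Prop :=
  (∀ (i : Fin (m + 1)) (j : Fin n),
     (∀ hi : (i : ℕ) < m, T (aG i j) = aG ⟨i, hi⟩ (Fin.succ j)) ∧
     ((i : ℕ) = m → T (aG i j) = cG 0 (Fin.succ j) (Fin.succ_ne_zero j).symm)) ∧
  (∀ (u v : Fin n) (h : u ≠ v), T (cG u v h) = cG (Fin.succ u) (Fin.succ v) (succ_ne_of_ne h))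

/-- The coface map `d_k : dk_{m,n} → dk_{m,n+1}`, built from the data of the pole
cofaces, the strand cofaces, and `ϑ_{m+1}`. -/
def coface (m n : ℕ) (Dp : ℕ → (dkmn m n →ₗ⁅ℚ⁆ dkmn (m + 1) n))
    (Ds : ℕ → (dkmn m n →ₗ⁅ℚ⁆ dkmn m (n + 1)))
    (T : dkmn (m + 1) n →ₗ⁅ℚ⁆ dkmn m (n + 1)) (k : ℕ) :
    dkmn m n →ₗ⁅ℚ⁆ dkmn m (n + 1) :=
  if k ≤ m then T.comp (Dp k) else Ds (k - m)

/-- The algebra map `ass_{m'+1} → ass_{m'}` with `x_p ↦ x_p` (`p < m'`) and `x_{m'} ↦ 0`. -/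
def setLast0A (m' : ℕ) : Ass (m' + 1) →ₐ[ℚ] Ass m' :=
  FreeAlgebra.lift ℚ fun p : Fin (m' + 1) =>
    if h : (p : ℕ) < m' then gen ⟨p, h⟩ else 0

/-- The Lie algebra map `FreeLie (Fin (m'+1)) → FreeLie (Fin m')` setting the last
generator to `0`. -/
def flSetLast0 (m' : ℕ) : FreeLieAlgebra ℚ (Fin (m' + 1)) →ₗ⁅ℚ⁆ FreeLieAlgebra ℚ (Fin m') :=
  FreeLieAlgebra.lift ℚ fun p : Fin (m' + 1) =>
    if h : (p : ℕ) < m' then FreeLieAlgebra.of ℚ ⟨p, h⟩ else 0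



-- auxiliary lemmas
lemma basis_eq_word {N : ℕ} (w : FreeMonoid (Fin N)) :
    FreeAlgebra.basisFreeMonoid ℚ (Fin N) w = wordProd w.toList := by
  rw [FreeAlgebra.basisFreeMonoid, Module.Basis.map_apply, Finsupp.coe_basisSingleOne]
  show FreeAlgebra.equivMonoidAlgebraFreeMonoid.symm (MonoidAlgebra.single w 1) = _
  rw [FreeAlgebra.equivMonoidAlgebraFreeMonoid]
  show ((MonoidAlgebra.lift ℚ (FreeAlgebra ℚ (Fin N)) (FreeMonoid (Fin N)))
    (FreeMonoid.lift (FreeAlgebra.ι ℚ))) (MonoidAlgebra.single w 1) = _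
  rw [MonoidAlgebra.lift_single, FreeMonoid.lift_apply, one_smul]; rfl

lemma liftWord_word {N : ℕ} {A : Type} [AddCommGroup A] [Module ℚ A]
    (f : List (Fin N) → A) (l : List (Fin N)) : liftWord f (wordProd l) = f l := by
  have : wordProd l = FreeAlgebra.basisFreeMonoid ℚ (Fin N) (FreeMonoid.ofList l) := by
    rw [basis_eq_word]; rfl
  rw [this, liftWord, Module.Basis.constr_basis]; rfl

lemma wordProd_append {N : ℕ} (l r : List (Fin N)) :
    wordProd (l ++ r) = wordProd l * wordProd r := by
  simp [wordProd]

lemma wordProd_nil {N : ℕ} : wordProd ([] : List (Fin N)) = 1 := rfl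

lemma wordProd_singleton {N : ℕ} (i : Fin N) : wordProd [i] = gen i := by
  simp [wordProd]

lemma word_induction {N : ℕ} {P : Ass N → Prop}
    (hw : ∀ l, P (wordProd l)) (hz : P 0)
    (ha : ∀ a b, P a → P b → P (a + b)) (hs : ∀ (c : ℚ) a, P a → P (c • a)) :
    ∀ a, P a := by
  intro a
  have hmem : a ∈ Submodule.span ℚ (Set.range (wordProd (N := N))) := by
    have : Submodule.span ℚ (Set.range (wordProd (N := N))) = ⊤ := by
      apply top_le_iff.mp
      rw [← (FreeAlgebra.basisFreeMonoid ℚ (Fin N)).span_eq]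
      apply Submodule.span_mono
      rintro _ ⟨w, rfl⟩
      exact ⟨w.toList, (basis_eq_word w).symm⟩
    simp [this]
  refine Submodule.span_induction ?_ hz (fun x y _ _ hx hy => ha x y hx hy)
    (fun c x _ hx => hs c x hx) hmem
  rintro _ ⟨l, rfl⟩; exact hw l

/-- Augmentation "ideal": span of nonempty words. -/
def Aug (N : ℕ) : Submodule ℚ (Ass N) :=
  Submodule.span ℚ {z | ∃ l : List (Fin N), l ≠ [] ∧ z = wordProd l}

lemma gen_mem_aug {N : ℕ} (i : Fin N) : gen i ∈ Aug N :=
  Submodule.subset_span ⟨[i], by simp, (wordProd_singleton i).symm⟩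

lemma aug_induction {N : ℕ} {P : Ass N → Prop}
    (hw : ∀ l, l ≠ [] → P (wordProd l)) (hz : P 0)
    (ha : ∀ a b, P a → P b → P (a + b)) (hs : ∀ (c : ℚ) a, P a → P (c • a)) :
    ∀ a ∈ Aug N, P a := by
  intro a hmem
  refine Submodule.span_induction ?_ hz (fun x y _ _ hx hy => ha x y hx hy)
    (fun c x _ hx => hs c x hx) hmem
  rintro _ ⟨l, hl, rfl⟩; exact hw l hl

lemma mul_mem_aug {N : ℕ} {a b : Ass N} (hb : b ∈ Aug N) : a * b ∈ Aug N := by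
  revert a
  show ∀ a : Ass N, a * b ∈ Aug N
  refine aug_induction (P := fun b => ∀ a : Ass N, a * b ∈ Aug N) ?_ ?_ ?_ ?_ b hb
  · intro r hr a
    induction a using word_induction with
    | hw l =>
        rw [← wordProd_append]
        exact Submodule.subset_span ⟨l ++ r, by simp [hr], rfl⟩
    | hz => rw [zero_mul]; exact (Aug N).zero_mem
    | ha x y hx hy => rw [add_mul]; exact (Aug N).add_mem hx hy
    | hs c x hx => rw [smul_mul_assoc]; exact (Aug N).smul_mem c hx
  · intro a; rw [mul_zero]; exact (Aug N).zero_mem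
  · intro x y hx hy a; rw [mul_add]; exact (Aug N).add_mem (hx a) (hy a)
  · intro c x hx a; rw [mul_smul_comm]; exact (Aug N).smul_mem c (hx a)

/-- `Aug` as a Lie subalgebra. -/
def augLie (N : ℕ) : LieSubalgebra ℚ (Ass N) :=
  { Aug N with
    lie_mem' := fun {a b} ha hb => by
      show ⁅a, b⁆ ∈ Aug N
      rw [Ring.lie_def]
      exact (Aug N).sub_mem (mul_mem_aug hb) (mul_mem_aug ha) }

lemma lie_mem_aug {N : ℕ} {a : Ass N} (h : a ∈ lieN N) : a ∈ Aug N := by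
  have : lieN N ≤ augLie N := by
    rw [lieN, LieSubalgebra.lieSpan_le]
    rintro _ ⟨i, rfl⟩
    exact gen_mem_aug i
  exact this h

lemma iota_word {N : ℕ} (l : List (Fin N)) :
    iotaMap N (wordProd l) = ((-1 : ℚ) ^ l.length) • wordProd l.reverse :=
  liftWord_word _ l

lemma iota_one {N : ℕ} : iotaMap N (1 : Ass N) = 1 := by
  have := iota_word ([] : List (Fin N))
  simpa [wordProd_nil] using this

lemma iota_gen {N : ℕ} (i : Fin N) : iotaMap N (gen i) = -gen i := by
  have := iota_word [i]
  rw [wordProd_singleton] at this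
  simpa [wordProd_singleton] using this

lemma iota_mul {N : ℕ} (a b : Ass N) :
    iotaMap N (a * b) = iotaMap N b * iotaMap N a := by
  induction a using word_induction with
  | hw l =>
      induction b using word_induction with
      | hw r =>
          rw [← wordProd_append, iota_word, iota_word, iota_word]
          rw [List.reverse_append, List.length_append, wordProd_append]
          rw [smul_mul_smul_comm, pow_add, mul_comm ((-1:ℚ)^l.length)]
      | hz => simp
      | ha x y hx hy => simp only [mul_add, map_add, hx, hy, add_mul]
      | hs c x hx => simp only [mul_smul_comm, map_smul, hx, smul_mul_assoc]
  | hz => simp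
  | ha x y hx hy => simp only [add_mul, map_add, hx, hy, mul_add]
  | hs c x hx => simp only [smul_mul_assoc, map_smul, hx, mul_smul_comm]

lemma partial_word {N : ℕ} (i : Fin N) (l : List (Fin N)) :
    partialD i (wordProd l) =
      (match l.getLast? with
       | some a => if a = i then wordProd l.dropLast else 0
       | none => 0) :=
  liftWord_word _ l

lemma partial_gen {N : ℕ} (i j : Fin N) :
    partialD i (gen j) = if j = i then 1 else 0 := by
  rw [← wordProd_singleton, partial_word]
  rfl

lemma partial_mul {N : ℕ} (i : Fin N) (a : Ass N) {b : Ass N} (hb : b ∈ Aug N) :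
    partialD i (a * b) = a * partialD i b := by
  revert a
  show ∀ a : Ass N, partialD i (a * b) = a * partialD i b
  refine aug_induction (P := fun b => ∀ a : Ass N, partialD i (a * b) = a * partialD i b)
    ?_ ?_ ?_ ?_ b hb
  · intro r hr a
    obtain ⟨r', c, rfl⟩ := (List.eq_nil_or_concat r).resolve_left hr
    induction a using word_induction with
    | hw l =>
        rw [← wordProd_append, partial_word, partial_word]
        simp only [List.concat_eq_append, ← List.append_assoc, List.getLast?_concat,
          List.dropLast_concat]
        rw [wordProd_append, mul_ite, mul_zero]
    | hz => simp
    | ha x y hx hy => simp only [add_mul, map_add, hx, hy]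
    | hs c' x hx => simp only [smul_mul_assoc, map_smul, hx]
  · intro a; simp
  · intro x y hx hy a; simp only [mul_add, map_add, hx, hy]
  · intro c x hx a; simp only [mul_smul_comm, map_smul, hx]

lemma partial_bracket {N : ℕ} (i : Fin N) {a b : Ass N}
    (ha : a ∈ Aug N) (hb : b ∈ Aug N) :
    partialD i ⁅a, b⁆ = a * partialD i b - b * partialD i a := by
  rw [Ring.lie_def, map_sub, partial_mul i a hb, partial_mul i b ha]

lemma eta_word {N : ℕ} (l r : List (Fin N)) :
    etaGr N (wordProd l) (wordProd r) = etaWord l r := by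
  rw [etaGr, liftWord_word, liftWord_word]

lemma eta_gen_gen {N : ℕ} (i j : Fin N) :
    etaGr N (gen i) (gen j) = if i = j then -gen i else 0 := by
  rw [← wordProd_singleton i, ← wordProd_singleton j, eta_word]
  show (if i = j then -(wordProd ([] ++ i :: [])) else 0) = _
  simp [wordProd_singleton]

lemma etaWord_concat {N : ℕ} (l : List (Fin N)) (c : Fin N) (r : List (Fin N)) :
    etaWord (l ++ [c]) r =
      (match r with
       | [] => (0 : Ass N)
       | b :: t => if c = b then -(wordProd (l ++ c :: t)) else 0) := by
  unfold etaWord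
  rw [List.getLast?_concat]
  cases r with
  | nil => rfl
  | cons b t =>
      show (if c = b then -(wordProd ((l ++ [c]).dropLast ++ c :: t)) else 0) = _
      rw [List.dropLast_concat]

lemma eta_mul_left {N : ℕ} (a : Ass N) {a' : Ass N} (ha' : a' ∈ Aug N) (b : Ass N) :
    etaGr N (a * a') b = a * etaGr N a' b := by
  revert a b
  show ∀ a b : Ass N, _
  refine aug_induction
    (P := fun a' => ∀ a b : Ass N, etaGr N (a * a') b = a * etaGr N a' b) ?_ ?_ ?_ ?_ a' ha'
  · intro w hw a b
    obtain ⟨w', c, rfl⟩ := (List.eq_nil_or_concat w).resolve_left hw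
    rw [List.concat_eq_append]
    induction a using word_induction with
    | hw l =>
        induction b using word_induction with
        | hw r =>
            rw [← wordProd_append, eta_word, eta_word, ← List.append_assoc,
              etaWord_concat, etaWord_concat]
            cases r with
            | nil => simp
            | cons b t =>
                show (if c = b then -(wordProd (l ++ w' ++ c :: t)) else 0)
                  = wordProd l * if c = b then -(wordProd (w' ++ c :: t)) else 0
                rw [mul_ite, mul_zero, mul_neg, ← wordProd_append, List.append_assoc]
        | hz => simp
        | ha x y hx hy => simp only [map_add, hx, hy, mul_add]
        | hs c' x hx => simp only [map_smul, hx, mul_smul_comm]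
    | hz => simp
    | ha x y hx hy => simp only [add_mul, map_add, LinearMap.add_apply, hx, hy]
    | hs c' x hx => simp only [smul_mul_assoc, map_smul, LinearMap.smul_apply, hx]
  · intro a b; simp
  · intro x y hx hy a b
    simp only [mul_add, map_add, LinearMap.add_apply, hx, hy]
  · intro c x hx a b
    simp only [mul_smul_comm, map_smul, LinearMap.smul_apply, hx]

lemma eta_mul_right {N : ℕ} (a : Ass N) {b : Ass N} (hb : b ∈ Aug N) (b' : Ass N) :
    etaGr N a (b * b') = etaGr N a b * b' := by
  revert a b'
  show ∀ a b' : Ass N, _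
  refine aug_induction
    (P := fun b => ∀ a b' : Ass N, etaGr N a (b * b') = etaGr N a b * b') ?_ ?_ ?_ ?_ b hb
  · intro w hw a b'
    cases w with
    | nil => exact absurd rfl hw
    | cons h t =>
        induction a using word_induction with
        | hw l =>
            induction b' using word_induction with
            | hw r =>
                rw [← wordProd_append, eta_word, eta_word]
                unfold etaWord
                cases hl : l.getLast? with
                | none => simp
                | some c =>
                    show (if c = h then -(wordProd (l.dropLast ++ c :: (t ++ r))) else 0)
                      = (if c = h then -(wordProd (l.dropLast ++ c :: t)) else 0) * wordProd r
                    rw [ite_mul, zero_mul, neg_mul, ← wordProd_append]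
                    simp
            | hz => simp
            | ha x y hx hy => simp only [mul_add, map_add, hx, hy]
            | hs c' x hx => simp only [mul_smul_comm, map_smul, hx]
        | hz => simp
        | ha x y hx hy =>
            simp only [map_add, LinearMap.add_apply, hx, hy, add_mul]
        | hs c' x hx =>
            simp only [map_smul, LinearMap.smul_apply, hx, smul_mul_assoc]
  · intro a b'; simp
  · intro x y hx hy a b'
    simp only [add_mul, map_add, LinearMap.add_apply, hx, hy]
  · intro c x hx a b'
    simp only [smul_mul_assoc, map_smul, LinearMap.smul_apply, hx]

lemma iota_lie {N : ℕ} {a : Ass N} (h : a ∈ lieN N) : iotaMap N a = -a := by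
  let K : LieSubalgebra ℚ (Ass N) :=
    { LinearMap.eqLocus (iotaMap N) (-LinearMap.id) with
      lie_mem' := fun {x y} hx hy => by
        have hx' : iotaMap N x = -x := hx
        have hy' : iotaMap N y = -y := hy
        show iotaMap N ⁅x, y⁆ = -LinearMap.id ⁅x, y⁆
        rw [Ring.lie_def, map_sub, iota_mul, iota_mul, hx', hy']
        simp only [Ring.lie_def, neg_sub, neg_mul, mul_neg, neg_neg,
          LinearMap.neg_apply, LinearMap.id_coe, id_eq]
        try abel
        }
  have hle : lieN N ≤ K := by
    rw [lieN, LieSubalgebra.lieSpan_le]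
    rintro _ ⟨i, rfl⟩
    show iotaMap N (gen i) = -LinearMap.id (gen i)
    rw [iota_gen]; rfl
  exact hle h

lemma eta_gen_lie {n : ℕ} (j : Fin n) {b : Ass n} (hb : b ∈ lieN n) :
    etaGr n (gen j) b =
      -∑ i, partialD i (gen j) * gen i * iotaMap n (partialD i b) := by
  let S : Submodule ℚ (Ass n) :=
    { carrier := {b | b ∈ lieN n ∧ etaGr n (gen j) b =
        -∑ i, partialD i (gen j) * gen i * iotaMap n (partialD i b)},
      add_mem' := by
        rintro x y ⟨hx, hx'⟩ ⟨hy, hy'⟩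
        refine ⟨(lieN n).add_mem hx hy, ?_⟩
        simp only [map_add, LinearMap.add_apply, hx', hy', mul_add,
          Finset.sum_add_distrib, neg_add]
      zero_mem' := by
        refine ⟨(lieN n).zero_mem, ?_⟩
        simp
      smul_mem' := by
        rintro c x ⟨hx, hx'⟩
        refine ⟨(lieN n).smul_mem c hx, ?_⟩
        simp only [map_smul, LinearMap.smul_apply, hx', mul_smul_comm,
          ← Finset.smul_sum, smul_neg] }
  let K : LieSubalgebra ℚ (Ass n) :=
    { S with
      lie_mem' := by
        rintro x y ⟨hx, hx'⟩ ⟨hy, hy'⟩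
        refine ⟨(lieN n).lie_mem hx hy, ?_⟩
        have hxa := lie_mem_aug hx
        have hya := lie_mem_aug hy
        have hix : iotaMap n x = -x := iota_lie hx
        have hiy : iotaMap n y = -y := iota_lie hy
        have hpb : ∀ i, partialD i ⁅x, y⁆ = x * partialD i y - y * partialD i x :=
          fun i => partial_bracket i hxa hya
        calc etaGr n (gen j) ⁅x, y⁆
            = etaGr n (gen j) x * y - etaGr n (gen j) y * x := by
              rw [Ring.lie_def, map_sub, eta_mul_right _ hxa, eta_mul_right _ hya]
          _ = (-∑ i, partialD i (gen j) * gen i * iotaMap n (partialD i x)) * y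
              - (-∑ i, partialD i (gen j) * gen i * iotaMap n (partialD i y)) * x := by
              rw [hx', hy']
          _ = -∑ i, partialD i (gen j) * gen i * iotaMap n (partialD i ⁅x, y⁆) := by
              simp only [hpb, map_sub, iota_mul, hix, hiy, mul_neg, neg_mul, mul_sub,
                sub_mul, Finset.sum_sub_distrib, neg_sub, neg_neg, mul_assoc,
                Finset.sum_mul, Finset.sum_neg_distrib]
              try abel
              }
  have hle : lieN n ≤ K := by
    rw [lieN, LieSubalgebra.lieSpan_le]
    rintro _ ⟨k, rfl⟩
    refine ⟨LieSubalgebra.subset_lieSpan ⟨k, rfl⟩, ?_⟩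
    rw [eta_gen_gen]
    simp only [partial_gen, apply_ite (iotaMap n), iota_one, map_zero,
      ite_mul, mul_ite, one_mul, zero_mul, mul_one, mul_zero]
    rw [Finset.sum_ite_eq]
    by_cases h : j = k <;> simp [h, eq_comm]
  exact (hle hb).2


/-- `η_gr(a,b) = −Σ_i (∂_i a)·x_i·ι(∂_i b)` for `a, b ∈ lie_n`. -/
theorem statement13 (n : ℕ) (a b : Ass n) (ha : a ∈ lieN n) (hb : b ∈ lieN n) :
    etaGr n a b = -∑ i, partialD i a * gen i * iotaMap n (partialD i b) := by
  let S : Submodule ℚ (Ass n) :=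
    { carrier := {a | a ∈ lieN n ∧ ∀ b ∈ lieN n, etaGr n a b =
        -∑ i, partialD i a * gen i * iotaMap n (partialD i b)},
      add_mem' := by
        rintro x y ⟨hx, hx'⟩ ⟨hy, hy'⟩
        refine ⟨(lieN n).add_mem hx hy, fun b hb => ?_⟩
        simp only [map_add, LinearMap.add_apply, hx' b hb, hy' b hb, add_mul,
          Finset.sum_add_distrib, neg_add]
      zero_mem' := by
        refine ⟨(lieN n).zero_mem, fun b hb => ?_⟩
        simp
      smul_mem' := by
        rintro c x ⟨hx, hx'⟩
        refine ⟨(lieN n).smul_mem c hx, fun b hb => ?_⟩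
        simp only [map_smul, LinearMap.smul_apply, hx' b hb, smul_mul_assoc,
          ← Finset.smul_sum, smul_neg] }
  let K : LieSubalgebra ℚ (Ass n) :=
    { S with
      lie_mem' := by
        rintro x y ⟨hx, hx'⟩ ⟨hy, hy'⟩
        refine ⟨(lieN n).lie_mem hx hy, fun b hb => ?_⟩
        have hxa := lie_mem_aug hx
        have hya := lie_mem_aug hy
        have hpb : ∀ i, partialD i ⁅x, y⁆ = x * partialD i y - y * partialD i x :=
          fun i => partial_bracket i hxa hya
        calc etaGr n ⁅x, y⁆ b
            = x * etaGr n y b - y * etaGr n x b := by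
              rw [Ring.lie_def, map_sub, LinearMap.sub_apply,
                eta_mul_left x hya b, eta_mul_left y hxa b]
          _ = x * (-∑ i, partialD i y * gen i * iotaMap n (partialD i b))
              - y * (-∑ i, partialD i x * gen i * iotaMap n (partialD i b)) := by
              rw [hx' b hb, hy' b hb]
          _ = -∑ i, partialD i ⁅x, y⁆ * gen i * iotaMap n (partialD i b) := by
              simp only [hpb, sub_mul, mul_sub, Finset.sum_sub_distrib, neg_sub,
                Finset.mul_sum, mul_neg, neg_neg, mul_assoc]
              try abel
              }
  have hle : lieN n ≤ K := by
    rw [lieN, LieSubalgebra.lieSpan_le]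
    rintro _ ⟨k, rfl⟩
    exact ⟨LieSubalgebra.subset_lieSpan ⟨k, rfl⟩, fun b hb => eta_gen_lie k hb⟩
  exact (hle ha).2 b hb


end
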